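/- Let M be a torsion-free left module over an integral domain R and N a submodule of M. Then Soc(Cl_M(N)) = Cl_M(Soc(N)) = Soc(N). -/

import Mathlib

/-- The closure of a submodule `N` of a module `M` over an integral domain:
all elements `m` with `r • m ∈ N` for some nonzero `r`. -/
def Submodule.domainClosure {R M : Type*} [CommRing R] [IsDomain R] [AddCommGroup M] [Module R M]
    (N : Submodule R M) : Submodule R M where
  carrier := {m : M | ∃ r : R, r ≠ 0 ∧ r • m ∈ N}
  zero_mem' := ⟨1, one_ne_zero, by simp⟩
  add_mem' := by
    rintro a b ⟨r, hr, hra⟩ ⟨s, hs, hsb⟩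
    refine ⟨r * s, mul_ne_zero hr hs, ?_⟩
    rw [smul_add]
    exact N.add_mem (by rw [mul_comm, mul_smul]; exact N.smul_mem s hra)
      (by rw [mul_smul]; exact N.smul_mem r hsb)
  smul_mem' := by
    rintro c a ⟨r, hr, hra⟩
    exact ⟨r, hr, by rw [smul_comm]; exact N.smul_mem c hra⟩

/-- The socle of a submodule `N` of `M`: the sum of all simple submodules of `M` contained
in `N`, regarded as a submodule of `M`. -/
def Submodule.socle {R M : Type*} [Ring R] [AddCommGroup M] [Module R M]
    (N : Submodule R M) : Submodule R M :=
  sSup {S : Submodule R M | S ≤ N ∧ IsSimpleModule R ↥S}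


private lemma isField_of_simple {R M : Type*} [CommRing R] [IsDomain R] [AddCommGroup M]
    [Module R M] [NoZeroSMulDivisors R M] (S : Submodule R M) (hS : IsSimpleModule R ↥S) :
    IsField R := by
  have := IsSimpleModule.nontrivial R ↥S
  obtain ⟨x, hx⟩ := exists_ne (0 : ↥S)
  have inj : Function.Injective (LinearMap.toSpanSingleton R ↥S x) :=
    smul_left_injective R hx
  have surj := IsSimpleModule.toSpanSingleton_surjective R hx
  have e := LinearEquiv.ofBijective (LinearMap.toSpanSingleton R ↥S x) ⟨inj, surj⟩
  have : IsSimpleModule R R := IsSimpleModule.congr e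
  obtain ⟨h1, h2⟩ := isSimpleModule_self_iff_isUnit.mp this
  exact ⟨exists_pair_ne R, mul_comm, fun {a} ha => (h2 a ha).exists_right_inv⟩

private lemma closure_eq_of_isField {R M : Type*} [CommRing R] [IsDomain R] [AddCommGroup M]
    [Module R M] (hF : IsField R) (K : Submodule R M) : Submodule.domainClosure K = K := by
  ext m
  constructor
  · rintro ⟨r, hr, hrm⟩
    obtain ⟨b, hb⟩ := hF.mul_inv_cancel hr
    have : m = b • r • m := by rw [← mul_smul, mul_comm, hb, one_smul]
    rw [this]
    exact K.smul_mem b hrm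
  · exact fun hm => ⟨1, one_ne_zero, by simpa using hm⟩

private lemma socle_le {R M : Type*} [Ring R] [AddCommGroup M] [Module R M]
    (K : Submodule R M) : K.socle ≤ K :=
  sSup_le fun _ hS => hS.1

/-- For a torsion-free module `M` over an integral domain and a submodule `N`,
`Soc(Cl_M(N)) = Cl_M(Soc(N)) = Soc(N)`. -/
theorem socle_closure_eq_closure_socle {R M : Type*} [CommRing R] [IsDomain R]
    [AddCommGroup M] [Module R M] [NoZeroSMulDivisors R M] (N : Submodule R M) :
    (Submodule.domainClosure N).socle = Submodule.domainClosure N.socle ∧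
      Submodule.domainClosure N.socle = N.socle := by
  by_cases hF : IsField R
  · have h1 := closure_eq_of_isField hF N
    have h2 := closure_eq_of_isField hF N.socle
    refine ⟨?_, h2⟩
    rw [h1, h2]
  · have hsoc : ∀ K : Submodule R M, K.socle = ⊥ := by
      intro K
      rw [Submodule.socle, sSup_eq_bot]
      rintro S ⟨-, hS⟩
      exact absurd (isField_of_simple S hS) hF
    have hclbot : Submodule.domainClosure (⊥ : Submodule R M) = ⊥ := by
      ext m
      simp only [Submodule.mem_bot]
      constructor
      · rintro ⟨r, hr, hrm⟩
        rcases smul_eq_zero.mp hrm with h | h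
        · exact absurd h hr
        · exact h
      · rintro rfl
        exact ⟨1, one_ne_zero, by simp⟩
    rw [hsoc, hsoc, hclbot]
    exact ⟨rfl, rfl⟩
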